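/- Let {T^n φ} (n ≥ 0) be a frame for H with T bounded, and let V ⊆ H be T-invariant with ‖Tψ‖ ≤ μ‖ψ‖ for all ψ ∈ V, where 0 ≤ μ < 1. Then for every ψ ∈ V, the operator K : ℓ²(ℕ₀) → H, K{c_n} = ∑_n c_n T^n ψ, is a well-defined compact operator. -/
import Mathlib


open scoped ComplexInnerProductSpace

/-- A sequence `f` in a Hilbert space is a frame if there exist constants
`A, B > 0` with `A‖x‖² ≤ ∑ᵢ |⟨x, f i⟩|² ≤ B‖x‖²` for all `x`. -/
def IsFrame {ι H : Type*} [NormedAddCommGroup H] [InnerProductSpace ℂ H] (f : ι → H) : Prop :=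
  ∃ A B : ℝ, 0 < A ∧ 0 < B ∧ ∀ x : H,
    A * ‖x‖ ^ 2 ≤ ∑' i, ‖⟪x, f i⟫‖ ^ 2 ∧ ∑' i, ‖⟪x, f i⟫‖ ^ 2 ≤ B * ‖x‖ ^ 2

/-- If `{T^n φ}` is a frame and `V` is a `T`-invariant subspace on which `T` is a
contraction, then for every `ψ ∈ V` the operator `K : ℓ² → H`, `K{cₙ} = ∑ cₙ Tⁿψ`, is a
well-defined compact operator. -/
noncomputable def evCLM (n : ℕ) : lp (fun _ : ℕ => ℂ) 2 →L[ℂ] ℂ :=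
  LinearMap.mkContinuous
    { toFun := fun c => c n
      map_add' := fun f g => by
        show (⇑(f + g)) n = _
        rw [lp.coeFn_add]; rfl
      map_smul' := fun a f => by
        show (⇑(a • f)) n = _
        rw [lp.coeFn_smul]; rfl } 1
    (fun c => by simpa using lp.norm_apply_le_norm two_ne_zero c n)

@[simp] lemma evCLM_apply (n : ℕ) (c : lp (fun _ : ℕ => ℂ) 2) : evCLM n c = c n := rfl

lemma rankOne_compact {H : Type*} [NormedAddCommGroup H] [InnerProductSpace ℂ H]
    (n : ℕ) (x : H) : IsCompactOperator (fun c : lp (fun _ : ℕ => ℂ) 2 => (c n) • x) := by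
  have hid : IsCompactOperator (id : ℂ → ℂ) :=
    ⟨Metric.closedBall 0 1, isCompact_closedBall 0 1,
      Metric.closedBall_mem_nhds 0 one_pos⟩
  have h1 : IsCompactOperator (fun c : lp (fun _ : ℕ => ℂ) 2 => c n) :=
    hid.comp_clm (evCLM n)
  exact h1.continuous_comp (g := fun a : ℂ => a • x) (by continuity)


theorem stmt18 {H : Type*} [NormedAddCommGroup H] [InnerProductSpace ℂ H] [CompleteSpace H]
    (T : H →L[ℂ] H) (φ : H)
    (hf : IsFrame (fun n : ℕ => (T ^ n) φ))
    (V : Submodule ℂ H) (hV : ∀ v ∈ V, T v ∈ V)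
    (μ : ℝ) (hμ0 : 0 ≤ μ) (hμ1 : μ < 1) (hcontr : ∀ ψ ∈ V, ‖T ψ‖ ≤ μ * ‖ψ‖) :
    ∀ ψ ∈ V, ∃ K : lp (fun _ : ℕ => ℂ) 2 →L[ℂ] H,
      (∀ c : lp (fun _ : ℕ => ℂ) 2, HasSum (fun n => c n • (T ^ n) ψ) (K c)) ∧
      IsCompactOperator ⇑K := by
  intro ψ hψ
  have hpow : ∀ n : ℕ, (T ^ n) ψ ∈ V ∧ ‖(T ^ n) ψ‖ ≤ μ ^ n * ‖ψ‖ := by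
    intro n
    induction n with
    | zero => simpa using hψ
    | succ n ih =>
      refine ⟨by rw [pow_succ']; exact hV _ ih.1, ?_⟩
      rw [pow_succ']
      calc ‖T ((T ^ n) ψ)‖ ≤ μ * ‖(T ^ n) ψ‖ := hcontr _ ih.1
        _ ≤ μ * (μ ^ n * ‖ψ‖) := mul_le_mul_of_nonneg_left ih.2 hμ0
        _ = μ ^ (n + 1) * ‖ψ‖ := by ring
  have hgeo : Summable (fun n : ℕ => μ ^ n) := summable_geometric_of_lt_one hμ0 hμ1
  have hle : ∀ (c : lp (fun _ : ℕ => ℂ) 2) (n : ℕ),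
      ‖c n • (T ^ n) ψ‖ ≤ ‖c‖ * (μ ^ n * ‖ψ‖) := by
    intro c n
    rw [norm_smul]
    exact mul_le_mul (lp.norm_apply_le_norm two_ne_zero c n) (hpow n).2 (norm_nonneg _)
      (norm_nonneg _)
  have hnorm : ∀ c : lp (fun _ : ℕ => ℂ) 2, Summable (fun n => ‖c n • (T ^ n) ψ‖) :=
    fun c => Summable.of_nonneg_of_le (fun n => norm_nonneg _) (hle c)
      ((hgeo.mul_right ‖ψ‖).mul_left ‖c‖)
  have hsum : ∀ c : lp (fun _ : ℕ => ℂ) 2, Summable (fun n => c n • (T ^ n) ψ) :=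
    fun c => (hnorm c).of_norm
  set S : ℝ := ∑' n : ℕ, μ ^ n with hS
  have hbound : ∀ c : lp (fun _ : ℕ => ℂ) 2,
      ‖∑' n, c n • (T ^ n) ψ‖ ≤ S * ‖ψ‖ * ‖c‖ := by
    intro c
    have h := tsum_of_norm_bounded
      (((hgeo.hasSum.mul_right ‖ψ‖).mul_left ‖c‖)) (hle c)
    calc ‖∑' n, c n • (T ^ n) ψ‖ ≤ ‖c‖ * (S * ‖ψ‖) := h
      _ = S * ‖ψ‖ * ‖c‖ := by ring
  let K : lp (fun _ : ℕ => ℂ) 2 →L[ℂ] H :=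
    LinearMap.mkContinuous
      { toFun := fun c => ∑' n, c n • (T ^ n) ψ
        map_add' := fun f g => by
          simp only [lp.coeFn_add, Pi.add_apply, add_smul]
          exact Summable.tsum_add (hsum f) (hsum g)
        map_smul' := fun a f => by
          simp only [RingHom.id_apply]
          rw [← Summable.tsum_const_smul a (hsum f)]
          congr 1
          funext n
          rw [lp.coeFn_smul, Pi.smul_apply, smul_eq_mul, mul_smul] }
      (S * ‖ψ‖) hbound
  have hKapp : ∀ c, K c = ∑' n, c n • (T ^ n) ψ := fun c => rfl
  refine ⟨K, fun c => by rw [hKapp]; exact (hsum c).hasSum, ?_⟩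
  let F : ℕ → (lp (fun _ : ℕ => ℂ) 2 →L[ℂ] H) := fun N =>
    ∑ n ∈ Finset.range N, (evCLM n).smulRight ((T ^ n) ψ)
  have hFc : ∀ N, IsCompactOperator ⇑(F N) := by
    intro N
    induction N with
    | zero => simpa [F] using isCompactOperator_zero
    | succ N ih =>
      have hstep : (F (N + 1)) = F N + (evCLM N).smulRight ((T ^ N) ψ) := by
        simp [F, Finset.sum_range_succ]
      rw [hstep]
      exact ih.add (rankOne_compact N ((T ^ N) ψ))
  have hb : ∀ N, ‖F N - K‖ ≤ μ ^ N * S * ‖ψ‖ := by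
    intro N
    have hS0 : 0 ≤ S := tsum_nonneg fun n => pow_nonneg hμ0 n
    apply ContinuousLinearMap.opNorm_le_bound _
      (mul_nonneg (mul_nonneg (pow_nonneg hμ0 N) hS0) (norm_nonneg _))
    intro c
    have hFapp : (F N) c = ∑ n ∈ Finset.range N, c n • (T ^ n) ψ := by
      simp [F, ContinuousLinearMap.sum_apply]
    have htail := Summable.sum_add_tsum_nat_add N (hsum c)
    have hdiff : (F N) c - K c = -∑' n, c (n + N) • (T ^ (n + N)) ψ := by
      rw [hFapp, hKapp, ← htail]; abel
    rw [ContinuousLinearMap.sub_apply, hdiff, norm_neg]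
    have hhs : HasSum (fun n : ℕ => ‖c‖ * (μ ^ (n + N) * ‖ψ‖)) (‖c‖ * (S * μ ^ N * ‖ψ‖)) := by
      have := ((hgeo.hasSum.mul_right (μ ^ N)).mul_right ‖ψ‖).mul_left ‖c‖
      refine this.congr_fun fun n => by rw [pow_add]
    have h := tsum_of_norm_bounded hhs (fun n => hle c (n + N))
    calc ‖∑' n, c (n + N) • (T ^ (n + N)) ψ‖ ≤ ‖c‖ * (S * μ ^ N * ‖ψ‖) := h
      _ = μ ^ N * S * ‖ψ‖ * ‖c‖ := by ring
  have hFtend : Filter.Tendsto F Filter.atTop (nhds K) := by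
    rw [tendsto_iff_norm_sub_tendsto_zero]
    have hlim : Filter.Tendsto (fun N : ℕ => μ ^ N * S * ‖ψ‖) Filter.atTop (nhds 0) := by
      have := (tendsto_pow_atTop_nhds_zero_of_lt_one hμ0 hμ1).mul_const S
      simpa using this.mul_const ‖ψ‖
    exact squeeze_zero (fun N => norm_nonneg _) hb hlim
  exact isCompactOperator_of_tendsto hFtend (Filter.Eventually.of_forall hFc)
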